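/- Let B be a left cancellative left semi-brace. Then G = Ker(λ|_E) if and only if B is isomorphic (as a left semi-brace) to a semidirect product A ⋊ T of a skew left brace A by a trivial left semi-brace T. -/

import Mathlib

/-- A left cancellative left semi-brace: `(B,+)` is a left cancellative semigroup,
`(B,*)` is a group (the paper's `∘`, with neutral element `1`, the paper's `0`),
and `a * (b + c) = a * b + a * (a⁻¹ + c)`. -/
class LeftSemiBrace (B : Type*) extends Add B, Group B where
  add_assoc' : ∀ a b c : B, a + b + c = a + (b + c)
  add_left_cancel' : ∀ a b c : B, a + b = a + c → b = c
  compat : ∀ a b c : B, a * (b + c) = a * b + a * (a⁻¹ + c)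

/-- A skew left brace: `(G,+)` and `(G,*)` are groups and
`a * (b + c) = a * b + -a + a * c`. -/
class SkewLeftBrace (G : Type*) extends AddGroup G, Group G where
  compat : ∀ a b c : G, a * (b + c) = a * b + -a + a * c

universe u

namespace LSBAux

variable {B : Type u} [LeftSemiBrace B]

/-- The lambda map of the semi-brace. -/
def lam (a b : B) : B := a * (a⁻¹ + b)

theorem aassoc (a b c : B) : a + b + c = a + (b + c) := LeftSemiBrace.add_assoc' a b c

theorem acancel {a b c : B} (h : a + b = a + c) : b = c := LeftSemiBrace.add_left_cancel' a b c h

theorem bcompat (a b c : B) : a * (b + c) = a * b + lam a c := LeftSemiBrace.compat a b c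

theorem one_add (c : B) : (1 : B) + c = c := by
  have h := LeftSemiBrace.compat (1 : B) 1 c
  simp only [one_mul, inv_one, mul_one] at h
  exact (acancel h).symm

theorem one_one : (1 : B) + 1 = 1 := one_add 1

theorem mul_eq (a c : B) : a * c = a + lam a c := by
  have h := bcompat a 1 c
  rwa [one_add, mul_one] at h

theorem lam_one_fun (c : B) : lam (1 : B) c = c := by
  simp [lam, one_add]

theorem lam_add (a b c : B) : lam a (b + c) = lam a b + lam a c := by
  have h := bcompat a (a⁻¹ + b) c
  rw [aassoc] at h
  exact h

theorem lam_mul (a b c : B) : lam (a * b) c = lam a (lam b c) := by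
  show (a * b) * ((a * b)⁻¹ + c) = a * (a⁻¹ + lam b c)
  rw [mul_inv_rev, mul_assoc, bcompat b (b⁻¹ * a⁻¹) c, ← mul_assoc b, mul_inv_cancel, one_mul]

theorem idem_left_id {e : B} (he : e + e = e) (b : B) : e + b = b := by
  have hy : e + lam e (e⁻¹ * b) = b := by
    have h := mul_eq e (e⁻¹ * b)
    rw [← mul_assoc, mul_inv_cancel, one_mul] at h
    exact h.symm
  calc e + b = e + (e + lam e (e⁻¹ * b)) := by rw [hy]
    _ = (e + e) + lam e (e⁻¹ * b) := (aassoc _ _ _).symm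
    _ = e + lam e (e⁻¹ * b) := by rw [he]
    _ = b := hy

theorem lam_idem {a e : B} (he : e + e = e) : lam a e + lam a e = lam a e := by
  rw [← lam_add, he]

theorem inv_idem {e : B} (he : e + e = e) : e⁻¹ + e⁻¹ = e⁻¹ := by
  have h1 : lam e e⁻¹ = 1 := by
    have h := mul_eq e e⁻¹
    rw [mul_inv_cancel, idem_left_id he] at h
    exact h.symm
  have h2 : e * (e⁻¹ + e⁻¹) = e * e⁻¹ := by
    rw [bcompat, h1, mul_inv_cancel, one_one]
  exact mul_left_cancel h2

theorem lam_idem_eq {e : B} (he : e + e = e) (b : B) : lam e b = e * b := by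
  show e * (e⁻¹ + b) = e * b
  rw [idem_left_id (inv_idem he) b]

theorem lam_idem_one {e : B} (he : e + e = e) : lam e 1 = e := by
  rw [lam_idem_eq he, mul_one]

theorem idem_mul {e f : B} (he : e + e = e) (hf : f + f = f) : e * f + e * f = e * f := by
  rw [← lam_idem_eq he]
  exact lam_idem hf

theorem add_eq (a x : B) : a + x = a * lam a⁻¹ x := by
  rw [mul_eq a (lam a⁻¹ x), ← lam_mul, mul_inv_cancel, lam_one_fun]

theorem memG_add_one (c : B) : (c + 1) + 1 = c + 1 := by rw [aassoc, one_one]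

theorem memG_add (x : B) {y : B} (hy : y + 1 = y) : (x + y) + 1 = x + y := by rw [aassoc, hy]

theorem add_negB (x : B) : x + lam x x⁻¹ = 1 := by rw [← mul_eq, mul_inv_cancel]

theorem memG_neg (x : B) : lam x x⁻¹ + 1 = lam x x⁻¹ := by
  apply acancel (a := x)
  rw [← aassoc, add_negB, one_one]

theorem neg_addB {x : B} (hx : x + 1 = x) : lam x x⁻¹ + x = 1 := by
  apply acancel (a := x)
  rw [← aassoc, add_negB, one_add, hx]

/-- The hypothesis `G = Ker(λ|_E)`. -/
def HYP (B : Type u) [LeftSemiBrace B] : Prop :=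
  {b : B | ∀ e : B, e + e = e → b * (b⁻¹ + e) = e} = {x : B | ∃ c : B, c + 1 = x}

theorem memG_iff (h : HYP B) (b : B) : b + 1 = b ↔ (∀ e : B, e + e = e → lam b e = e) := by
  have h2 := Set.ext_iff.mp h b
  simp only [Set.mem_setOf_eq] at h2
  constructor
  · intro hb e he
    exact h2.mpr ⟨b, hb⟩ e he
  · intro hb
    obtain ⟨c, hc⟩ := h2.mp hb
    rw [← hc]
    exact memG_add_one c

theorem K_lam (h : HYP B) {b : B} (hb : b + 1 = b) {e : B} (he : e + e = e) : lam b e = e :=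
  (memG_iff h b).mp hb e he

theorem memG_inv (h : HYP B) {x : B} (hx : x + 1 = x) : x⁻¹ + 1 = x⁻¹ := by
  rw [memG_iff h]
  intro e he
  have h1 : lam x (lam x⁻¹ e) = lam x⁻¹ e := K_lam h hx (lam_idem he)
  have h2 : lam x (lam x⁻¹ e) = e := by rw [← lam_mul, mul_inv_cancel, lam_one_fun]
  exact h1.symm.trans h2

theorem memG_mul (h : HYP B) {x y : B} (hx : x + 1 = x) (hy : y + 1 = y) :
    x * y + 1 = x * y := by
  rw [mul_eq]
  apply memG_add
  have h1 : lam x y + lam x 1 = lam x y := by rw [← lam_add, hy]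
  rwa [K_lam h hx one_one] at h1

/-- The skew-brace part `G = B + 1`. -/
def GG (B : Type u) [LeftSemiBrace B] : Type u := {x : B // x + 1 = x}

/-- The additive idempotents. -/
def EE (B : Type u) [LeftSemiBrace B] : Type u := {e : B // e + e = e}

/-- The idempotents form a group under `*`. -/
def groupE (B : Type u) [LeftSemiBrace B] : Group (EE B) :=
  letI : Mul (EE B) := ⟨fun e f => ⟨e.1 * f.1, idem_mul e.2 f.2⟩⟩
  letI : One (EE B) := ⟨⟨1, one_one⟩⟩
  letI : Inv (EE B) := ⟨fun e => ⟨e.1⁻¹, inv_idem e.2⟩⟩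
  Group.ofLeftAxioms
    (fun a b c => Subtype.ext (mul_assoc a.1 b.1 c.1))
    (fun a => Subtype.ext (one_mul a.1))
    (fun a => Subtype.ext (inv_mul_cancel a.1))

/-- Under the hypothesis, `G` is a skew left brace. -/
def skewG (h : HYP B) : SkewLeftBrace (GG B) :=
  letI : Add (GG B) := ⟨fun x y => ⟨x.1 + y.1, memG_add x.1 y.2⟩⟩
  letI : Zero (GG B) := ⟨⟨1, one_one⟩⟩
  letI : Neg (GG B) := ⟨fun x => ⟨lam x.1 x.1⁻¹, memG_neg x.1⟩⟩
  letI : Mul (GG B) := ⟨fun x y => ⟨x.1 * y.1, memG_mul h x.2 y.2⟩⟩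
  letI : One (GG B) := ⟨⟨1, one_one⟩⟩
  letI : Inv (GG B) := ⟨fun x => ⟨x.1⁻¹, memG_inv h x.2⟩⟩
  { toAddGroup := AddGroup.ofLeftAxioms
      (fun a b c => Subtype.ext (aassoc a.1 b.1 c.1))
      (fun a => Subtype.ext (one_add a.1))
      (fun a => Subtype.ext (neg_addB a.2)),
    toGroup := Group.ofLeftAxioms
      (fun a b c => Subtype.ext (mul_assoc a.1 b.1 c.1))
      (fun a => Subtype.ext (one_mul a.1))
      (fun a => Subtype.ext (inv_mul_cancel a.1)),
    compat := fun a b c => Subtype.ext (by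
      show a.1 * (b.1 + c.1) = (a.1 * b.1 + lam a.1 a.1⁻¹) + a.1 * c.1
      rw [bcompat a.1 b.1 c.1, mul_eq a.1 c.1,
        aassoc (a.1 * b.1) (lam a.1 a.1⁻¹) (a.1 + lam a.1 c.1),
        ← aassoc (lam a.1 a.1⁻¹) a.1 (lam a.1 c.1), neg_addB a.2, one_add]) }

/-- The action of `E` on `G`. -/
def alph (e : EE B) (g : GG B) : GG B := ⟨lam e.1 g.1 + 1, memG_add_one _⟩

theorem alph_val (h : HYP B) (e : EE B) (g : GG B) :
    (alph e g).1 = e.1 * g.1 * e.1⁻¹ := by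
  show lam e.1 g.1 + 1 = e.1 * g.1 * e.1⁻¹
  rw [lam_idem_eq e.2, add_eq (e.1 * g.1) 1, mul_inv_rev, lam_mul,
    lam_idem_one (inv_idem e.2), K_lam h (memG_inv h g.2) (inv_idem e.2)]

/-- The forward map of the isomorphism. -/
def fwd (a : B) : GG B × EE B :=
  (⟨a + 1, memG_add_one a⟩, ⟨(lam a⁻¹ 1)⁻¹, inv_idem (lam_idem one_one)⟩)

theorem bwd_fwd (a : B) : (fwd a).1.1 * (fwd a).2.1 = a := by
  show (a + 1) * (lam a⁻¹ 1)⁻¹ = a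
  rw [add_eq a 1, mul_inv_cancel_right]

theorem fwd_mul (h : HYP B) (g : GG B) (e : EE B) : fwd (g.1 * e.1) = (g, e) := by
  have h1 : g.1 * e.1 = g.1 + e.1 := by rw [mul_eq, K_lam h g.2 e.2]
  refine Prod.ext (Subtype.ext ?_) (Subtype.ext ?_)
  · show g.1 * e.1 + 1 = g.1
    rw [h1, aassoc, idem_left_id e.2 1, g.2]
  · show (lam (g.1 * e.1)⁻¹ 1)⁻¹ = e.1
    rw [mul_inv_rev, lam_mul, K_lam h (memG_inv h g.2) one_one,
      lam_idem_one (inv_idem e.2), inv_inv]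

/-- The isomorphism `B ≃ G × E`. -/
def equivF (h : HYP B) : B ≃ GG B × EE B where
  toFun := fwd
  invFun := fun p => p.1.1 * p.2.1
  left_inv := bwd_fwd
  right_inv := fun p => fwd_mul h p.1 p.2

theorem add_decomp (h : HYP B) (g₁ g₂ : GG B) (e₁ e₂ : EE B) :
    (g₁.1 * e₁.1) + (g₂.1 * e₂.1) = (g₁.1 + g₂.1) * e₂.1 := by
  have m1 : g₁.1 * e₁.1 = g₁.1 + e₁.1 := by rw [mul_eq, K_lam h g₁.2 e₁.2]
  have m2 : g₂.1 * e₂.1 = g₂.1 + e₂.1 := by rw [mul_eq, K_lam h g₂.2 e₂.2]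
  have m3 : (g₁.1 + g₂.1) * e₂.1 = (g₁.1 + g₂.1) + e₂.1 := by
    rw [mul_eq, K_lam h (memG_add g₁.1 g₂.2) e₂.2]
  rw [m1, m2, m3, aassoc g₁.1, idem_left_id e₁.2, aassoc]

theorem mul_decomp (g₁ g₂ : GG B) (e₁ e₂ : EE B) :
    (g₁.1 * e₁.1) * (g₂.1 * e₂.1) = (g₁.1 * (e₁.1 * g₂.1 * e₁.1⁻¹)) * (e₁.1 * e₂.1) := by
  group

end LSBAux

open LSBAux in
/-- `G = Ker(λ|_E)` iff `B` is isomorphic to a semidirect product of a skew left brace `A`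
by a trivial left semi-brace `T`. -/
theorem stmt10 (B : Type u) [LeftSemiBrace B] :
    ({b : B | ∀ e : B, e + e = e → b * (b⁻¹ + e) = e} = {x : B | ∃ c : B, c + 1 = x}) ↔
    ∃ (A : Type u) (_ : SkewLeftBrace A) (T : Type u) (_ : Group T) (α : T → A → A),
      α 1 = id ∧
      (∀ t₁ t₂ : T, α (t₁ * t₂) = α t₁ ∘ α t₂) ∧
      (∀ (t : T) (x y : A), α t (x + y) = α t x + α t y) ∧
      (∀ (t : T) (x y : A), α t (x * y) = α t x * α t y) ∧
      ∃ f : B ≃ A × T,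
        (∀ x y : B, f (x + y) = ((f x).1 + (f y).1, (f y).2)) ∧
        (∀ x y : B, f (x * y) = ((f x).1 * α (f x).2 (f y).1, (f x).2 * (f y).2)) := by
  constructor
  · intro h
    letI iG : SkewLeftBrace (GG B) := skewG h
    letI iE : Group (EE B) := groupE B
    refine ⟨GG B, iG, EE B, iE, alph, ?_, ?_, ?_, ?_, equivF h, ?_, ?_⟩
    · funext g
      apply Subtype.ext
      show lam (1 : B) g.1 + 1 = g.1
      rw [lam_one_fun, g.2]
    · intro t₁ t₂
      funext g
      apply Subtype.ext
      show lam (t₁.1 * t₂.1) g.1 + 1 = lam t₁.1 (lam t₂.1 g.1 + 1) + 1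
      rw [lam_add, lam_idem_one t₁.2, lam_mul, aassoc, idem_left_id t₁.2 1]
    · intro t x y
      apply Subtype.ext
      show lam t.1 (x.1 + y.1) + 1 = (lam t.1 x.1 + 1) + (lam t.1 y.1 + 1)
      rw [lam_add t.1 x.1 y.1, aassoc (lam t.1 x.1) 1 (lam t.1 y.1 + 1), one_add, ← aassoc]
    · intro t x y
      apply Subtype.ext
      calc (alph t (x * y)).1 = t.1 * (x.1 * y.1) * t.1⁻¹ := alph_val h t _
        _ = (t.1 * x.1 * t.1⁻¹) * (t.1 * y.1 * t.1⁻¹) := by group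
        _ = (alph t x).1 * (alph t y).1 := by rw [alph_val h t x, alph_val h t y]
    · intro x y
      have key : x + y = ((fwd x).1.1 + (fwd y).1.1) * (fwd y).2.1 := by
        conv_lhs => rw [← bwd_fwd x, ← bwd_fwd y]
        exact add_decomp h (fwd x).1 (fwd y).1 (fwd x).2 (fwd y).2
      show fwd (x + y) = _
      rw [key]
      exact fwd_mul h ⟨(fwd x).1.1 + (fwd y).1.1, memG_add _ (fwd y).1.2⟩ (fwd y).2
    · intro x y
      have key : x * y = ((fwd x).1.1 * ((fwd x).2.1 * (fwd y).1.1 * (fwd x).2.1⁻¹)) *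
          ((fwd x).2.1 * (fwd y).2.1) := by
        conv_lhs => rw [← bwd_fwd x, ← bwd_fwd y]
        exact mul_decomp (fwd x).1 (fwd y).1 (fwd x).2 (fwd y).2
      have hconj : ((fwd x).2.1 * (fwd y).1.1 * (fwd x).2.1⁻¹) + 1 =
          (fwd x).2.1 * (fwd y).1.1 * (fwd x).2.1⁻¹ := by
        rw [← alph_val h (fwd x).2 (fwd y).1]
        exact (alph (fwd x).2 (fwd y).1).2
      show fwd (x * y) = _
      rw [key]
      refine (fwd_mul h ⟨_, memG_mul h (fwd x).1.2 hconj⟩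
        ⟨_, idem_mul (fwd x).2.2 (fwd y).2.2⟩).trans ?_
      refine Prod.ext (Subtype.ext ?_) (Subtype.ext ?_)
      · show (fwd x).1.1 * ((fwd x).2.1 * (fwd y).1.1 * (fwd x).2.1⁻¹) =
          (fwd x).1.1 * (alph (fwd x).2 (fwd y).1).1
        rw [alph_val h]
      · rfl
  · rintro ⟨A, iA, T, iT, α, hα1, hαm, hαadd, hαmul, f, fadd, fmul⟩
    letI := iA
    letI := iT
    -- `0 = 1` in a skew left brace
    have mul_zero' : ∀ a : A, a * 0 = a := by
      intro a
      have hc := SkewLeftBrace.compat a 0 0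
      rw [add_zero] at hc
      have h2 : (0 : A) = -a + a * 0 := by
        apply add_left_cancel (a := a * 0)
        rw [add_zero, ← add_assoc]
        exact hc
      have h3 : a + (0 : A) = a + (-a + a * 0) := by rw [← h2]
      rw [add_zero, ← add_assoc, add_neg_cancel, zero_add] at h3
      exact h3.symm
    have zero_eq_one : (0 : A) = 1 := by
      have := mul_zero' 1
      rwa [one_mul] at this
    -- `α t 0 = 0`
    have hα0 : ∀ t : T, α t 0 = 0 := by
      intro t
      have h1 := hαadd t 0 0
      rw [add_zero] at h1
      have h2 : α t 0 + 0 = α t 0 + α t 0 := by rw [add_zero, ← h1]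
      exact (add_left_cancel h2).symm
    -- `f 1 = (0, 1)`
    have hf1 : f (1 : B) = ((0 : A), (1 : T)) := by
      have hm := fmul 1 1
      rw [mul_one] at hm
      have ht0 := congrArg Prod.snd hm
      have ht : (f (1 : B)).2 * (f (1 : B)).2 = (f (1 : B)).2 := ht0.symm
      have ht1 : (f (1 : B)).2 = 1 := mul_eq_right.mp ht
      have ha0 := congrArg Prod.fst hm
      have ha : (f (1 : B)).1 = (f (1 : B)).1 * α (f (1 : B)).2 (f (1 : B)).1 := ha0
      rw [ht1, hα1, id_eq] at ha
      have ha1 : (f (1 : B)).1 = 1 := mul_eq_right.mp ha.symm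
      exact Prod.ext (ha1.trans zero_eq_one.symm) ht1
    -- idempotents are exactly elements with first component `0`
    have idem_fst : ∀ e : B, e + e = e ↔ (f e).1 = 0 := by
      intro e
      constructor
      · intro he
        have h1 := fadd e e
        rw [he] at h1
        have h20 := congrArg Prod.fst h1
        have h2 : (f e).1 = (f e).1 + (f e).1 := h20
        have h3 : (f e).1 + 0 = (f e).1 + (f e).1 := by rw [add_zero, ← h2]
        exact (add_left_cancel h3).symm
      · intro h0
        apply f.injective
        rw [fadd e e]
        have h1 : (f e).1 + (f e).1 = (f e).1 := by rw [h0, zero_add]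
        rw [h1]
    -- membership in `G` is exactly second component `1`
    have memG' : ∀ b : B, (∃ c : B, c + 1 = b) ↔ (f b).2 = 1 := by
      intro b
      constructor
      · rintro ⟨c, rfl⟩
        have h1 := fadd c 1
        have h2 := congrArg Prod.snd h1
        have h3 : (f (c + 1)).2 = (f (1 : B)).2 := h2
        rw [h3, hf1]
      · intro hb2
        refine ⟨b, f.injective ?_⟩
        rw [fadd b 1, hf1]
        have h1 : (f b).1 + ((0 : A), (1 : T)).1 = (f b).1 := by
          show (f b).1 + (0 : A) = (f b).1
          rw [add_zero]
        rw [h1]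
        show ((f b).1, (1 : T)) = f b
        rw [← hb2]
    -- the key computation for `λ_b(e)`
    have key : ∀ b e : B, e + e = e → f (b * (b⁻¹ + e)) = ((0 : A), (f b).2 * (f e).2) := by
      intro b e he
      have hinv := fmul b b⁻¹
      rw [mul_inv_cancel, hf1] at hinv
      have hA0 := congrArg Prod.fst hinv
      have hA : (f b).1 * α (f b).2 (f b⁻¹).1 = 0 := hA0.symm
      have h1 : f (b⁻¹ + e) = ((f b⁻¹).1 + (f e).1, (f e).2) := fadd b⁻¹ e
      have h2 : (f (b⁻¹ + e)).1 = (f b⁻¹).1 := by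
        rw [h1]
        show (f b⁻¹).1 + (f e).1 = (f b⁻¹).1
        rw [(idem_fst e).mp he, add_zero]
      have h3 : (f (b⁻¹ + e)).2 = (f e).2 := by rw [h1]
      rw [fmul b (b⁻¹ + e), h2, h3, hA]
    -- conclusion
    ext b
    simp only [Set.mem_setOf_eq]
    rw [memG' b]
    constructor
    · intro hK
      have he1 : ((f.symm ((0 : A), (1 : T))) : B) + f.symm ((0 : A), (1 : T)) =
          f.symm ((0 : A), (1 : T)) := by
        apply (idem_fst _).mpr
        rw [f.apply_symm_apply]
      have h1 := hK _ he1
      have h2 := congrArg (fun z => (f z).2) h1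
      rw [key b _ he1, f.apply_symm_apply] at h2
      simpa using h2
    · intro hb2 e he
      apply f.injective
      rw [key b e he, hb2, one_mul, ← (idem_fst e).mp he]
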